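/- Let P(x) be a monic m×m matrix polynomial of degree n and β₁,…,βₙ ∈ ℂ pairwise distinct. With Wᵢ = P(βᵢ)/∏_{j≠i}(βᵢ − βⱼ), one has the decomposition P(x) = ∏ᵢ(x−βᵢ)I_m + Σᵢ Wᵢ ∏_{j≠i}(x−βⱼ), and consequently det P(x) = det(xI − D + (e⊗I_m)[W₁,…,Wₙ]) where D = diag(β₁I_m,…,βₙI_m). -/

import Mathlib

open Polynomial Matrix

open Finset

set_option maxHeartbeats 1000000

open Polynomial Matrix Finset

lemma lagrange_aux (n : ℕ) (β : Fin n → ℂ) (hβ : Function.Injective β)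
    (p q : ℂ[X]) (hdeg : p.degree ≤ (n : WithBot ℕ)) (hqdeg : q.degree ≤ (n : WithBot ℕ))
    (hcoeff : q.coeff n = p.coeff n) (heval : ∀ i, q.eval (β i) = p.eval (β i)) :
    p = q := by
  refine Polynomial.eq_of_degree_sub_lt_of_eval_index_eq (univ : Finset (Fin n))
    (Function.Injective.injOn hβ) ?_ (fun i _ => (heval i).symm)
  rw [Finset.card_univ, Fintype.card_fin]
  have hc : (p - q).coeff n = 0 := by simp [hcoeff]
  have hle : (p - q).degree ≤ (n : WithBot ℕ) := le_trans (degree_sub_le p q) (max_le hdeg hqdeg)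
  rcases lt_or_eq_of_le hle with h | h
  · exact h
  · exfalso
    have hne : p - q ≠ 0 := by
      intro h0; rw [h0] at h; rw [degree_zero] at h; simp at h
    have hld : (p - q).natDegree = n := natDegree_eq_of_degree_eq_some h
    have := mt leadingCoeff_eq_zero.mp hne
    rw [leadingCoeff, hld] at this
    exact this hc

lemma scalar_lagrange (n : ℕ) (β : Fin n → ℂ) (hβ : Function.Injective β)
    (p : ℂ[X]) (hdeg : p.degree ≤ (n : WithBot ℕ)) :
    p = C (p.coeff n) * ∏ i, (X - C (β i))
      + ∑ i, C (((univ.erase i).prod (fun j => β i - β j))⁻¹ * p.eval (β i)) *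
          (univ.erase i).prod (fun j => X - C (β j)) := by
  have hmono : (∏ i : Fin n, (X - C (β i))).Monic :=
    monic_prod_of_monic _ _ fun i _ => monic_X_sub_C _
  have hdegprod : (∏ i : Fin n, (X - C (β i))).natDegree = n := by
    rw [natDegree_prod_of_monic _ _ fun i _ => monic_X_sub_C _]; simp
  have hprodle : (∏ i : Fin n, (X - C (β i))).degree ≤ (n : WithBot ℕ) :=
    le_trans degree_le_natDegree (by exact_mod_cast hdegprod.le)
  have hdegerase : ∀ i : Fin n,
      ((univ.erase i).prod (fun j => X - C (β j))).degree < (n : WithBot ℕ) := by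
    intro i
    have h1 : ((univ.erase i).prod (fun j => X - C (β j))).natDegree = (univ.erase i).card := by
      rw [natDegree_prod_of_monic _ _ fun j _ => monic_X_sub_C _]; simp
    have h2 : (univ.erase i).card < n := by
      simpa using Finset.card_erase_lt_of_mem (Finset.mem_univ i)
    calc ((univ.erase i).prod (fun j => X - C (β j))).degree
        ≤ (((univ.erase i).prod (fun j => X - C (β j))).natDegree : WithBot ℕ) :=
          degree_le_natDegree
      _ < (n : WithBot ℕ) := by rw [h1]; exact_mod_cast h2
  refine lagrange_aux n β hβ p _ hdeg ?_ ?_ ?_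
  · apply le_trans (degree_add_le _ _)
    apply max_le
    · apply le_trans (degree_mul_le _ _)
      calc (C (p.coeff n)).degree + (∏ i : Fin n, (X - C (β i))).degree
          ≤ 0 + (n : WithBot ℕ) := add_le_add degree_C_le hprodle
        _ = (n : WithBot ℕ) := zero_add _
    · apply le_trans (degree_sum_le _ _)
      apply Finset.sup_le
      intro i _
      apply le_trans (degree_mul_le _ _)
      calc (C _).degree + ((univ.erase i).prod (fun j => X - C (β j))).degree
          ≤ 0 + (n : WithBot ℕ) := add_le_add degree_C_le (le_of_lt (hdegerase i))
        _ = (n : WithBot ℕ) := zero_add _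
  · rw [coeff_add, coeff_C_mul]
    have h1 : (∏ i : Fin n, (X - C (β i))).coeff n = 1 := by
      have := hmono.coeff_natDegree; rwa [hdegprod] at this
    rw [h1, mul_one]
    have h2 : (∑ i : Fin n, C (((univ.erase i).prod (fun j => β i - β j))⁻¹ * p.eval (β i)) *
        (univ.erase i).prod (fun j => X - C (β j))).coeff n = 0 := by
      rw [finset_sum_coeff]
      apply Finset.sum_eq_zero
      intro i _
      apply coeff_eq_zero_of_degree_lt
      apply lt_of_le_of_lt (degree_mul_le _ _)
      calc (C _).degree + ((univ.erase i).prod (fun j => X - C (β j))).degree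
          ≤ 0 + ((univ.erase i).prod (fun j => X - C (β j))).degree :=
            add_le_add degree_C_le le_rfl
        _ = _ := zero_add _
        _ < (n : WithBot ℕ) := hdegerase i
    rw [h2, add_zero]
  · intro k
    rw [eval_add, eval_mul, eval_prod]
    have h0 : (∏ i : Fin n, eval (β k) (X - C (β i))) = 0 :=
      Finset.prod_eq_zero (Finset.mem_univ k) (by simp)
    rw [h0, mul_zero, zero_add, eval_finset_sum]
    rw [Finset.sum_eq_single k]
    · rw [eval_mul, eval_C, eval_prod]
      have hne : (∏ j ∈ univ.erase k, (β k - β j)) ≠ 0 := by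
        apply Finset.prod_ne_zero_iff.mpr
        intro j hj
        have : j ≠ k := Finset.ne_of_mem_erase hj
        exact sub_ne_zero_of_ne fun h => this (hβ h.symm)
      simp only [eval_sub, eval_X, eval_C]
      field_simp

    · intro i _ hik
      rw [eval_mul, eval_prod]
      have : (∏ j ∈ univ.erase i, eval (β k) (X - C (β j))) = 0 :=
        Finset.prod_eq_zero (Finset.mem_erase.mpr ⟨hik.symm, Finset.mem_univ k⟩) (by simp)
      rw [this, mul_zero]
    · intro h; exact absurd (Finset.mem_univ k) h

lemma det_secular (m n : ℕ) (d : Fin n → ℂ) (hd : ∀ i, d i ≠ 0)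
    (V : Fin n → Matrix (Fin m) (Fin m) ℂ) :
    Matrix.det ((∏ i, d i) • (1 : Matrix (Fin m) (Fin m) ℂ)
        + ∑ i, (∏ j ∈ univ.erase i, d j) • V i)
    = Matrix.det (Matrix.of fun p₁ p₂ : Fin n × Fin m =>
        (if p₁ = p₂ then d p₁.1 else 0) + V p₂.1 p₁.2 p₂.2) := by
  classical
  set E : Matrix (Fin n × Fin m) (Fin m) ℂ :=
    Matrix.of (fun p c => if p.2 = c then (1:ℂ) else 0) with hE
  set F : Matrix (Fin m) (Fin n × Fin m) ℂ :=
    Matrix.of (fun a p => V p.1 a p.2) with hF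
  have hM : (Matrix.of fun p₁ p₂ : Fin n × Fin m =>
        (if p₁ = p₂ then d p₁.1 else 0) + V p₂.1 p₁.2 p₂.2)
      = Matrix.diagonal (fun p => d p.1) + E * F := by
    ext p₁ p₂
    simp only [Matrix.of_apply, Matrix.add_apply, Matrix.diagonal_apply, Matrix.mul_apply,
      hE, hF]
    congr 1
    simp [ite_mul]
  have hdet : IsUnit (Matrix.diagonal (fun p : Fin n × Fin m => d p.1)).det := by
    rw [Matrix.det_diagonal]
    exact isUnit_iff_ne_zero.mpr (Finset.prod_ne_zero_iff.mpr fun p _ => hd p.1)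
  rw [hM, Matrix.det_add_mul E F hdet]
  have hinv : (Matrix.diagonal (fun p : Fin n × Fin m => d p.1))⁻¹
      = Matrix.diagonal (fun p => (d p.1)⁻¹) := by
    refine Matrix.inv_eq_right_inv ?_
    rw [Matrix.diagonal_mul_diagonal]
    have : (fun p : Fin n × Fin m => d p.1 * (d p.1)⁻¹) = fun _ => (1:ℂ) :=
      funext fun p => mul_inv_cancel₀ (hd p.1)
    rw [this, Matrix.diagonal_one]
  have hS : (1 : Matrix (Fin m) (Fin m) ℂ)
        + F * (Matrix.diagonal (fun p : Fin n × Fin m => d p.1))⁻¹ * E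
      = 1 + ∑ j, (d j)⁻¹ • V j := by
    rw [hinv]
    congr 1
    ext a c
    simp only [Matrix.mul_apply, Matrix.diagonal_apply, hE, hF, Matrix.of_apply,
      Matrix.sum_apply, Matrix.smul_apply, smul_eq_mul]
    rw [Fintype.sum_prod_type]
    apply Finset.sum_congr rfl
    intro j _
    rw [Finset.sum_eq_single c]
    · rw [Finset.sum_eq_single (⟨j, c⟩ : Fin n × Fin m)]
      · simp [mul_comm]
      · intro p _ hp
        rcases eq_or_ne p.1 j with h1 | h1
        · rcases eq_or_ne p.2 c with h2 | h2
          · exact absurd (Prod.ext h1 h2) hp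
          · simp [h2, hp]
        · simp [Ne.symm h1, hp]
      · intro h; exact absurd (Finset.mem_univ _) h
    · intro c' _ hc'
      rw [Finset.sum_eq_single (⟨j, c'⟩ : Fin n × Fin m)]
      · simp [hc']
      · intro p _ hp
        rcases eq_or_ne p.1 j with h1 | h1
        · rcases eq_or_ne p.2 c' with h2 | h2
          · exact absurd (Prod.ext h1 h2) hp
          · simp [h2, hp]
        · simp [Ne.symm h1, hp]
      · intro h; exact absurd (Finset.mem_univ _) h
    · intro h; exact absurd (Finset.mem_univ _) h
  rw [hS, Matrix.det_diagonal]
  have hprodp : (∏ p : Fin n × Fin m, d p.1) = (∏ i, d i) ^ m := by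
    rw [Fintype.prod_prod_type]
    simp [Finset.prod_pow]
  have hfac : (∏ i, d i) • ((1 : Matrix (Fin m) (Fin m) ℂ) + ∑ j, (d j)⁻¹ • V j)
      = (∏ i, d i) • (1 : Matrix (Fin m) (Fin m) ℂ)
        + ∑ i, (∏ j ∈ univ.erase i, d j) • V i := by
    rw [smul_add, Finset.smul_sum]
    congr 1
    apply Finset.sum_congr rfl
    intro i _
    rw [smul_smul]
    congr 1
    rw [← Finset.mul_prod_erase univ d (Finset.mem_univ i), mul_comm (d i), mul_assoc,
      mul_inv_cancel₀ (hd i), mul_one]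
  rw [← hfac, Matrix.det_smul, hprodp, Fintype.card_fin]

/-- for a monic m×m matrix polynomial `P` of degree `n` and
pairwise distinct `β₁,…,βₙ`, with `Wᵢ = P(βᵢ)/∏_{j≠i}(βᵢ−βⱼ)` one has
`P(x) = ∏ᵢ(x−βᵢ)I + Σᵢ Wᵢ ∏_{j≠i}(x−βⱼ)`, and consequently
`det P(x) = det(xI − D + (e⊗I)[W₁,…,Wₙ])` with `D = diag(β₁I,…,βₙI)`. -/
theorem secular_linearization_monic (m n : ℕ)
    (P : Matrix (Fin m) (Fin m) (Polynomial ℂ))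
    (hPdeg : ∀ a c, (P a c).degree ≤ (n : WithBot ℕ))
    (hmonic : (Matrix.of fun a c : Fin m => (P a c).coeff n)
      = (1 : Matrix (Fin m) (Fin m) ℂ))
    (β : Fin n → ℂ) (hβ : Function.Injective β) :
    P = (∏ i, (Polynomial.X - Polynomial.C (β i))) •
          (1 : Matrix (Fin m) (Fin m) (Polynomial ℂ))
        + ∑ i, ((Finset.univ.erase i).prod
            (fun j => Polynomial.X - Polynomial.C (β j))) •
          ((((Finset.univ.erase i).prod (fun j => β i - β j))⁻¹ •
            P.map (Polynomial.eval (β i))).map Polynomial.C) ∧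
    P.det = Matrix.det (Matrix.of fun p₁ p₂ : Fin n × Fin m =>
      (if p₁ = p₂ then Polynomial.X - Polynomial.C (β p₁.1) else 0)
      + Polynomial.C ((((Finset.univ.erase p₂.1).prod
            (fun j => β p₂.1 - β j))⁻¹ •
          P.map (Polynomial.eval (β p₂.1))) p₁.2 p₂.2)) := by
  have hm : ∀ a c : Fin m, (P a c).coeff n = if a = c then 1 else 0 := by
    intro a c
    have := Matrix.ext_iff.2 hmonic a c
    simpa [Matrix.one_apply] using this
  have h1 : P = (∏ i, (Polynomial.X - Polynomial.C (β i))) •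
          (1 : Matrix (Fin m) (Fin m) (Polynomial ℂ))
        + ∑ i, ((Finset.univ.erase i).prod
            (fun j => Polynomial.X - Polynomial.C (β j))) •
          ((((Finset.univ.erase i).prod (fun j => β i - β j))⁻¹ •
            P.map (Polynomial.eval (β i))).map Polynomial.C) := by
    refine Matrix.ext fun a c => ?_
    have key := scalar_lagrange n β hβ (P a c) (hPdeg a c)
    rw [hm a c] at key
    simp only [Matrix.add_apply, Matrix.smul_apply, Matrix.sum_apply, Matrix.one_apply,
      Matrix.map_apply, Matrix.smul_apply, smul_eq_mul]
    conv_lhs => rw [key]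
    refine congrArg₂ HAdd.hAdd ?_ ?_
    · rw [mul_comm]
      try split <;> simp
    · exact Finset.sum_congr rfl fun i _ => mul_comm _ _
  refine ⟨h1, ?_⟩
  apply Polynomial.eq_of_infinite_eval_eq
  apply Set.Infinite.mono ?_ ((Set.finite_range β).infinite_compl)
  intro x hx
  have hx' : ∀ i, x - β i ≠ 0 := by
    intro i h
    exact hx ⟨i, (sub_eq_zero.mp h).symm⟩
  simp only [Set.mem_setOf_eq]
  rw [show (Polynomial.eval x : ℂ[X] → ℂ) = ⇑(Polynomial.evalRingHom x) from rfl]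
  rw [RingHom.map_det, RingHom.map_det]
  have hL : (Polynomial.evalRingHom x).mapMatrix P
      = (∏ i, (x - β i)) • (1 : Matrix (Fin m) (Fin m) ℂ)
        + ∑ i, (∏ j ∈ univ.erase i, (x - β j)) •
            (((univ.erase i).prod (fun j => β i - β j))⁻¹ • P.map (Polynomial.eval (β i))) := by
    refine Matrix.ext fun a c => ?_
    have key := scalar_lagrange n β hβ (P a c) (hPdeg a c)
    have hkey := congrArg (Polynomial.eval x) key
    simp only [eval_add, eval_mul, eval_prod, eval_sub, eval_X, eval_C, eval_finset_sum] at hkey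
    simp only [RingHom.mapMatrix_apply, Matrix.map_apply, coe_evalRingHom,
      Matrix.add_apply, Matrix.smul_apply, Matrix.sum_apply, Matrix.one_apply,
      smul_eq_mul, hm a c] at hkey ⊢
    rw [hkey]
    refine congrArg₂ HAdd.hAdd ?_ ?_
    · rw [mul_comm]
      try split <;> simp
    · exact Finset.sum_congr rfl fun i _ => by ring
  have hR : (Polynomial.evalRingHom x).mapMatrix (Matrix.of fun p₁ p₂ : Fin n × Fin m =>
        (if p₁ = p₂ then Polynomial.X - Polynomial.C (β p₁.1) else 0)
        + Polynomial.C ((((Finset.univ.erase p₂.1).prod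
              (fun j => β p₂.1 - β j))⁻¹ •
            P.map (Polynomial.eval (β p₂.1))) p₁.2 p₂.2))
      = Matrix.of (fun p₁ p₂ : Fin n × Fin m =>
          (if p₁ = p₂ then (x - β p₁.1) else 0)
          + ((((Finset.univ.erase p₂.1).prod (fun j => β p₂.1 - β j))⁻¹ •
              P.map (Polynomial.eval (β p₂.1))) p₁.2 p₂.2)) := by
    ext p₁ p₂
    simp only [RingHom.mapMatrix_apply, Matrix.map_apply, coe_evalRingHom, Matrix.of_apply,
      eval_add, eval_C, apply_ite (Polynomial.eval x), eval_sub, eval_X, eval_zero]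
  rw [hL, hR]
  exact det_secular m n (fun i => x - β i) hx'
    (fun i => ((univ.erase i).prod (fun j => β i - β j))⁻¹ • P.map (Polynomial.eval (β i)))
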